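/- arXiv:2504.07283 — 5 statements merged into one kernel-verified Lean document; each statement's English description precedes it below -/
import Mathlib

section
/- For any nonzero real number R₊, there is no function g : ℝ × ℝ → ℝ such that for every n ∈ ℕ and every finite state sequence s : Fin (n+2) → ℝ, the progress reward at the final step — defined as R₊ if s(n+1) < min_{i ≤ n} s(i) and 0 otherwise — equals g(s(n), s(n+1)). In other words, the progress reward cannot be written as a function of only the current and next state, so it is non-Markovian on the original state space. -/
/-- Non-Markovianity of the progress reward on the original state space:
for any nonzero bonus `R`, no function `g` of only the current and next state
can reproduce the reward "`R` if the new state strictly decreases the running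
minimum of the history, `0` otherwise". -/
theorem stmt0 (R : ℝ) (hR : R ≠ 0) :
    ¬ ∃ g : ℝ × ℝ → ℝ, ∀ (n : ℕ) (s : Fin (n + 2) → ℝ),
      (if s (Fin.last (n + 1)) <
          Finset.univ.inf' Finset.univ_nonempty (fun i : Fin (n + 1) => s i.castSucc)
        then R else 0)
        = g (s (Fin.castSucc (Fin.last n)), s (Fin.last (n + 1))) := by
  rintro ⟨g, hg⟩
  have h0 := hg 0 ![1, 0]
  have h1 := hg 1 ![-1, 1, 0]
  norm_num [Fin.last, Fin.castSucc, Fin.castAdd, Fin.castLE, Finset.lt_inf'_iff,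
    Fin.forall_fin_one, Fin.forall_fin_two] at h0 h1
  rw [if_neg (by push_neg; exact ⟨0, by norm_num⟩)] at h1
  exact hR (by linarith)
end

section
/- Let S be a type, Φ : S → ℝ a bounded function (|Φ(x)| ≤ B for all x), γ ∈ ℝ with 0 < γ < 1, s : ℕ → S a trajectory, and r : ℕ → ℝ a bounded reward sequence (|r t| ≤ C for all t). Then both series ∑_{t=0}^∞ γ^t · r t and ∑_{t=0}^∞ γ^t · (r t + γ·Φ(s (t+1)) − Φ(s t)) converge, and the shaped discounted return equals the original discounted return minus Φ(s 0): ∑_{t=0}^∞ γ^t · (r t + γ·Φ(s (t+1)) − Φ(s t)) = ∑_{t=0}^∞ γ^t · r t − Φ(s 0). -/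
lemma aux_summable (γ : ℝ) (hγ0 : 0 < γ) (hγ1 : γ < 1)
    (f : ℕ → ℝ) (C : ℝ) (hf : ∀ t, |f t| ≤ C) :
    Summable (fun t => γ ^ t * f t) := by
  have hgeo : Summable (fun t : ℕ => C * γ ^ t) :=
    (summable_geometric_of_lt_one hγ0.le hγ1).mul_left C
  apply Summable.of_norm_bounded hgeo
  intro t
  rw [norm_mul, Real.norm_eq_abs, Real.norm_eq_abs, abs_pow, abs_of_pos hγ0, mul_comm]
  exact mul_le_mul_of_nonneg_right (hf t) (pow_nonneg hγ0.le t)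

/-- Infinite-horizon invariance of potential-based reward shaping: with bounded
potential `Φ`, discount `0 < γ < 1` and bounded rewards, both discounted series
converge and the shaped return equals the original return minus `Φ (s 0)`. -/
theorem stmt4 {S : Type*} (Φ : S → ℝ) (B : ℝ) (hΦ : ∀ x, |Φ x| ≤ B)
    (γ : ℝ) (hγ0 : 0 < γ) (hγ1 : γ < 1)
    (s : ℕ → S) (r : ℕ → ℝ) (C : ℝ) (hr : ∀ t, |r t| ≤ C) :
    Summable (fun t => γ ^ t * r t) ∧
    Summable (fun t => γ ^ t * (r t + γ * Φ (s (t + 1)) - Φ (s t))) ∧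
    ∑' t, γ ^ t * (r t + γ * Φ (s (t + 1)) - Φ (s t))
      = (∑' t, γ ^ t * r t) - Φ (s 0) := by
  have hR : Summable (fun t => γ ^ t * r t) := aux_summable γ hγ0 hγ1 r C hr
  have hg : Summable (fun t => γ ^ t * Φ (s t)) :=
    aux_summable γ hγ0 hγ1 (fun t => Φ (s t)) B (fun t => hΦ (s t))
  have hg' : Summable (fun t => γ ^ (t + 1) * Φ (s (t + 1))) :=
    (summable_nat_add_iff 1).mpr hg
  have key : ∀ t, γ ^ t * (r t + γ * Φ (s (t + 1)) - Φ (s t))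
      = γ ^ t * r t + (γ ^ (t + 1) * Φ (s (t + 1)) - γ ^ t * Φ (s t)) := by
    intro t; ring
  have hsub : Summable (fun t => γ ^ (t + 1) * Φ (s (t + 1)) - γ ^ t * Φ (s t)) :=
    hg'.sub hg
  have hS : Summable (fun t => γ ^ t * (r t + γ * Φ (s (t + 1)) - Φ (s t))) := by
    simp only [key]; exact hR.add hsub
  refine ⟨hR, hS, ?_⟩
  have h1 : ∑' t, γ ^ t * (r t + γ * Φ (s (t + 1)) - Φ (s t))
      = (∑' t, γ ^ t * r t) + ∑' t, (γ ^ (t + 1) * Φ (s (t + 1)) - γ ^ t * Φ (s t)) := by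
    simp only [key]; exact Summable.tsum_add hR hsub
  rw [h1, Summable.tsum_sub hg' hg]
  have h2 : ∑' t, γ ^ (t + 1) * Φ (s (t + 1))
      = (∑' t, γ ^ t * Φ (s t)) - γ ^ 0 * Φ (s 0) := by
    rw [Summable.tsum_eq_zero_add hg]; ring
  rw [h2]; ring
end

section
/- Let S be a measurable space, μ a probability measure on the trajectory space ℕ → S (with the product σ-algebra), Φ : S → ℝ bounded and measurable, γ ∈ ℝ with 0 < γ < 1, and r : S × S → ℝ bounded and measurable. Then the expected shaped discounted return equals the expected original discounted return minus the expected initial potential: ∫ (∑_{t=0}^∞ γ^t · (r(s t, s (t+1)) + γ·Φ(s (t+1)) − Φ(s t))) dμ(s) = ∫ (∑_{t=0}^∞ γ^t · r(s t, s (t+1))) dμ(s) − ∫ Φ(s 0) dμ(s). -/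
open MeasureTheory

private lemma summable_aux {γ : ℝ} (hγ0 : 0 < γ) (hγ1 : γ < 1) (a : ℕ → ℝ) (C : ℝ)
    (ha : ∀ t, |a t| ≤ C) : Summable (fun t => γ ^ t * a t) := by
  have hgeo : Summable (fun t : ℕ => C * γ ^ t) :=
    (summable_geometric_of_lt_one hγ0.le hγ1).mul_left C
  refine Summable.of_abs (hgeo.of_nonneg_of_le (fun t => abs_nonneg _) fun t => ?_)
  rw [abs_mul, abs_pow, abs_of_pos hγ0, mul_comm]
  exact mul_le_mul_of_nonneg_right (ha t) (pow_nonneg hγ0.le t)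

private lemma tsum_shaped {γ : ℝ} (hγ0 : 0 < γ) (hγ1 : γ < 1) (a f : ℕ → ℝ) (C B : ℝ)
    (ha : ∀ t, |a t| ≤ C) (hf : ∀ t, |f t| ≤ B) :
    ∑' t, γ ^ t * (a t + γ * f (t + 1) - f t) = (∑' t, γ ^ t * a t) - f 0 := by
  have Sa := summable_aux hγ0 hγ1 a C ha
  have Sf := summable_aux hγ0 hγ1 f B hf
  have Sf' : Summable (fun t => γ ^ (t + 1) * f (t + 1)) :=
    (summable_nat_add_iff 1).2 Sf
  have key : ∀ t, γ ^ t * (a t + γ * f (t + 1) - f t)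
      = γ ^ t * a t + (γ ^ (t + 1) * f (t + 1) - γ ^ t * f t) := by
    intro t; ring
  calc ∑' t, γ ^ t * (a t + γ * f (t + 1) - f t)
      = ∑' t, (γ ^ t * a t + (γ ^ (t + 1) * f (t + 1) - γ ^ t * f t)) := tsum_congr key
    _ = (∑' t, γ ^ t * a t) + ∑' t, (γ ^ (t + 1) * f (t + 1) - γ ^ t * f t) :=
        Summable.tsum_add Sa (Sf'.sub Sf)
    _ = (∑' t, γ ^ t * a t) + ((∑' t, γ ^ (t + 1) * f (t + 1)) - ∑' t, γ ^ t * f t) := by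
        rw [Summable.tsum_sub Sf' Sf]
    _ = (∑' t, γ ^ t * a t) - f 0 := by
        have := Summable.tsum_eq_zero_add Sf
        simp only [pow_zero, one_mul] at this
        rw [this]; ring

/-- Expectation form of the shaping-invariance argument (Proposition 1):
for a probability measure `μ` on trajectory space (product σ-algebra on
`ℕ → S`), bounded measurable potential `Φ`, discount `0 < γ < 1`, and bounded
measurable transition reward `r`, the expected shaped discounted return equals
the expected original discounted return minus the expected initial potential. -/
theorem stmt5 {S : Type*} [MeasurableSpace S]
    (μ : Measure (ℕ → S)) [IsProbabilityMeasure μ]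
    (Φ : S → ℝ) (hΦm : Measurable Φ) (B : ℝ) (hΦb : ∀ x, |Φ x| ≤ B)
    (γ : ℝ) (hγ0 : 0 < γ) (hγ1 : γ < 1)
    (r : S × S → ℝ) (hrm : Measurable r) (C : ℝ) (hrb : ∀ p, |r p| ≤ C) :
    ∫ s, (∑' t, γ ^ t * (r (s t, s (t + 1)) + γ * Φ (s (t + 1)) - Φ (s t))) ∂μ
      = (∫ s, (∑' t, γ ^ t * r (s t, s (t + 1))) ∂μ) - ∫ s, Φ (s 0) ∂μ := by
  set F : (ℕ → S) → ℝ := fun s => ∑' t, γ ^ t * r (s t, s (t + 1)) with hF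
  have hterm : ∀ t, Measurable fun s : ℕ → S => γ ^ t * r (s t, s (t + 1)) := fun t =>
    measurable_const.mul
      (hrm.comp ((measurable_pi_apply t).prodMk (measurable_pi_apply (t + 1))))
  have hFm : Measurable F := by
    refine measurable_of_tendsto_metrizable
      (f := fun n (s : ℕ → S) => ∑ t ∈ Finset.range n, γ ^ t * r (s t, s (t + 1)))
      (fun n => Finset.measurable_sum _ fun t _ => hterm t) ?_
    rw [tendsto_pi_nhds]
    intro s
    exact (summable_aux hγ0 hγ1 (fun t => r (s t, s (t + 1))) C
      (fun t => hrb _)).hasSum.tendsto_sum_nat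
  have hgeo : Summable (fun t : ℕ => C * γ ^ t) :=
    (summable_geometric_of_lt_one hγ0.le hγ1).mul_left C
  have hFb : ∀ s, |F s| ≤ C * (1 - γ)⁻¹ := by
    intro s
    have S1 := summable_aux hγ0 hγ1 (fun t => r (s t, s (t + 1))) C (fun t => hrb _)
    have hsum : Summable fun t => ‖γ ^ t * r (s t, s (t + 1))‖ := by
      simpa only [Real.norm_eq_abs] using S1.abs
    have h1 := norm_tsum_le_tsum_norm hsum
    simp only [Real.norm_eq_abs] at h1
    refine h1.trans ?_
    calc (∑' t, |γ ^ t * r (s t, s (t + 1))|) ≤ ∑' t : ℕ, C * γ ^ t := by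
          refine Summable.tsum_le_tsum (fun t => ?_) S1.abs hgeo
          rw [abs_mul, abs_pow, abs_of_pos hγ0, mul_comm]
          exact mul_le_mul_of_nonneg_right (hrb _) (pow_nonneg hγ0.le t)
      _ = C * (1 - γ)⁻¹ := by
          rw [tsum_mul_left, tsum_geometric_of_lt_one hγ0.le hγ1]
  have hFi : Integrable F μ := by
    refine Integrable.mono' (integrable_const (C * (1 - γ)⁻¹)) hFm.aestronglyMeasurable
      (ae_of_all _ fun s => ?_)
    simpa using hFb s
  have hΦ0m : Measurable fun s : ℕ → S => Φ (s 0) := hΦm.comp (measurable_pi_apply 0)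
  have hΦ0i : Integrable (fun s : ℕ → S => Φ (s 0)) μ := by
    refine Integrable.mono' (integrable_const B) hΦ0m.aestronglyMeasurable
      (ae_of_all _ fun s => ?_)
    simpa using hΦb (s 0)
  have heq : ∀ s : ℕ → S,
      (∑' t, γ ^ t * (r (s t, s (t + 1)) + γ * Φ (s (t + 1)) - Φ (s t)))
        = F s - Φ (s 0) :=
    fun s => tsum_shaped hγ0 hγ1 (fun t => r (s t, s (t + 1))) (fun t => Φ (s t)) C B
      (fun t => hrb _) (fun t => hΦb _)
  calc ∫ s, (∑' t, γ ^ t * (r (s t, s (t + 1)) + γ * Φ (s (t + 1)) - Φ (s t))) ∂μ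
      = ∫ s, (F s - Φ (s 0)) ∂μ := by
        exact integral_congr_ae (ae_of_all _ heq)
    _ = (∫ s, F s ∂μ) - ∫ s, Φ (s 0) ∂μ := integral_sub hFi hΦ0i
end

section
/- Consider a deterministic system with state space S, action space A, transition function T : S × A → S, bounded reward r : S × A → ℝ, discount factor γ ∈ (0,1), and bounded potential Φ : S → ℝ. For an initial state x and an action sequence a : ℕ → A, let x_0 = x, x_{t+1} = T(x_t, a_t), and define the return G(x, a) = ∑_{t=0}^∞ γ^t · r(x_t, a_t) and the shaped return G'(x, a) = ∑_{t=0}^∞ γ^t · (r(x_t, a_t) + γ·Φ(x_{t+1}) − Φ(x_t)). Define the optimal values V(x) = ⨆_{a : ℕ → A} G(x, a) and V'(x) = ⨆_{a : ℕ → A} G'(x, a). Then for every state x, V'(x) = V(x) − Φ(x). -/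
/-- Trajectory of a deterministic system from initial state `x` under the
action sequence `a`: `traj T x a 0 = x`, `traj T x a (t+1) = T (traj T x a t, a t)`. -/
def traj {S A : Type*} (T : S × A → S) (x : S) (a : ℕ → A) : ℕ → S
  | 0 => x
  | t + 1 => T (traj T x a t, a t)

/-- Policy-invariance of potential-based shaping (Ng–Harada–Russell) for a
deterministic system: the optimal shaped value equals the optimal original
value shifted by `−Φ x`. -/
theorem stmt6 {S A : Type*} [Nonempty A] (T : S × A → S)
    (r : S × A → ℝ) (C : ℝ) (hr : ∀ p, |r p| ≤ C)
    (γ : ℝ) (hγ0 : 0 < γ) (hγ1 : γ < 1)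
    (Φ : S → ℝ) (B : ℝ) (hΦ : ∀ x, |Φ x| ≤ B) (x : S) :
    (⨆ a : ℕ → A, ∑' t, γ ^ t *
        (r (traj T x a t, a t) + γ * Φ (traj T x a (t + 1)) - Φ (traj T x a t)))
      = (⨆ a : ℕ → A, ∑' t, γ ^ t * r (traj T x a t, a t)) - Φ x := by
  have hγ0' : (0:ℝ) ≤ γ := hγ0.le
  have hgeo : Summable (fun t : ℕ => γ ^ t) := summable_geometric_of_lt_one hγ0' hγ1
  -- summability of the reward series, for each action sequence
  have hsumr : ∀ a : ℕ → A, Summable (fun t => γ ^ t * r (traj T x a t, a t)) := by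
    intro a
    refine Summable.of_norm_bounded (hgeo.mul_right C) (fun t => ?_)
    rw [norm_mul, Real.norm_eq_abs, Real.norm_eq_abs, abs_of_nonneg (pow_nonneg hγ0' _)]
    exact mul_le_mul_of_nonneg_left (hr _) (pow_nonneg hγ0' _)
  -- the potential telescoping series
  have key : ∀ a : ℕ → A,
      (∑' t, γ ^ t *
        (r (traj T x a t, a t) + γ * Φ (traj T x a (t + 1)) - Φ (traj T x a t)))
      = (∑' t, γ ^ t * r (traj T x a t, a t)) - Φ x := by
    intro a
    set f : ℕ → ℝ := fun t => γ ^ t * Φ (traj T x a t) with hf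
    have hftend : Filter.Tendsto f Filter.atTop (nhds 0) := by
      have hb : Filter.Tendsto (fun t : ℕ => B * γ ^ t) Filter.atTop (nhds 0) := by
        simpa using (tendsto_pow_atTop_nhds_zero_of_lt_one hγ0' hγ1).const_mul B
      refine squeeze_zero_norm (fun t => ?_) hb
      rw [Real.norm_eq_abs, abs_mul, abs_of_nonneg (pow_nonneg hγ0' _), mul_comm]
      exact mul_le_mul_of_nonneg_right (hΦ _) (pow_nonneg hγ0' _)
    have hsumtel : Summable (fun t => f (t + 1) - f t) := by
      refine Summable.of_norm_bounded (hgeo.mul_right ((γ + 1) * B)) (fun t => ?_)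
      have h1 : |f (t + 1)| ≤ γ ^ t * (γ * B) := by
        have hB := hΦ (traj T x a (t + 1))
        have hp := pow_nonneg hγ0' t
        have ha := abs_nonneg (Φ (traj T x a (t + 1)))
        rw [hf]; dsimp only
        rw [abs_mul, abs_of_nonneg (pow_nonneg hγ0' _), pow_succ]
        nlinarith [mul_le_mul_of_nonneg_left hB (mul_nonneg hp hγ0')]
      have h2 : |f t| ≤ γ ^ t * B := by
        rw [hf, abs_mul, abs_of_nonneg (pow_nonneg hγ0' _)]
        exact mul_le_mul_of_nonneg_left (hΦ _) (pow_nonneg hγ0' _)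
      calc ‖f (t + 1) - f t‖ ≤ |f (t + 1)| + |f t| := abs_sub _ _
        _ ≤ γ ^ t * (γ * B) + γ ^ t * B := add_le_add h1 h2
        _ = γ ^ t * ((γ + 1) * B) := by ring
    have htel : (∑' t, (f (t + 1) - f t)) = - f 0 := by
      have hps := hsumtel.hasSum.tendsto_sum_nat
      have hps' : Filter.Tendsto (fun n => ∑ i ∈ Finset.range n, (f (i + 1) - f i))
          Filter.atTop (nhds (- f 0)) := by
        have : (fun n => ∑ i ∈ Finset.range n, (f (i + 1) - f i)) = fun n => f n - f 0 := by
          funext n; exact Finset.sum_range_sub f n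
        rw [this]
        simpa using hftend.sub_const (f 0)
      exact tendsto_nhds_unique hps hps'
    have hdecomp : ∀ t : ℕ, γ ^ t *
        (r (traj T x a t, a t) + γ * Φ (traj T x a (t + 1)) - Φ (traj T x a t))
        = γ ^ t * r (traj T x a t, a t) + (f (t + 1) - f t) := by
      intro t; simp only [hf, pow_succ]; ring
    calc (∑' t, γ ^ t *
        (r (traj T x a t, a t) + γ * Φ (traj T x a (t + 1)) - Φ (traj T x a t)))
        = ∑' t, (γ ^ t * r (traj T x a t, a t) + (f (t + 1) - f t)) := by
          exact tsum_congr hdecomp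
      _ = (∑' t, γ ^ t * r (traj T x a t, a t)) + ∑' t, (f (t + 1) - f t) :=
          Summable.tsum_add (hsumr a) hsumtel
      _ = (∑' t, γ ^ t * r (traj T x a t, a t)) - Φ x := by
          rw [htel]; simp [hf, traj, sub_eq_add_neg]
  -- boundedness of the value function
  have hbdd : BddAbove (Set.range fun a : ℕ → A => ∑' t, γ ^ t * r (traj T x a t, a t)) := by
    refine ⟨C / (1 - γ), ?_⟩
    rintro v ⟨a, rfl⟩
    calc (∑' t, γ ^ t * r (traj T x a t, a t))
        ≤ ∑' t : ℕ, γ ^ t * C := by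
          refine Summable.tsum_le_tsum (fun t => ?_) (hsumr a) (hgeo.mul_right C)
          exact mul_le_mul_of_nonneg_left (le_of_abs_le (hr _)) (pow_nonneg hγ0' _)
      _ = C / (1 - γ) := by
          rw [tsum_mul_right, tsum_geometric_of_lt_one hγ0' hγ1]
          rw [div_eq_mul_inv, mul_comm]
  -- conclude via the order isomorphism of subtracting a constant
  have := (OrderIso.addRight (-Φ x)).map_ciSup hbdd
  simp only [OrderIso.addRight_apply] at this
  rw [← sub_eq_add_neg] at this
  rw [iSup_congr key]
  simp only [sub_eq_add_neg]
  exact this.symm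
end

section
/- Consider a deterministic system with state space S, action space A, transition function T : S × A → S, bounded reward r : S × A → ℝ, discount factor γ ∈ (0,1), and bounded potential Φ : S → ℝ. For an initial state x and an action sequence a : ℕ → A, let x_0 = x, x_{t+1} = T(x_t, a_t), and define the return G(x, a) = ∑_{t=0}^∞ γ^t · r(x_t, a_t) and the shaped return G'(x, a) = ∑_{t=0}^∞ γ^t · (r(x_t, a_t) + γ·Φ(x_{t+1}) − Φ(x_t)). Then for every state x, an action sequence a attains the supremum of G'(x, ·) over all action sequences if and only if it attains the supremum of G(x, ·); i.e., the set of optimal action sequences is identical under the original and shaped rewards. -/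
section aux
variable {S A : Type*} [Nonempty A] (T : S × A → S)
    (r : S × A → ℝ) (C : ℝ) (γ : ℝ)
    (Φ : S → ℝ) (B : ℝ)

lemma sum_r (hr : ∀ p, |r p| ≤ C) (hγ0 : 0 < γ) (hγ1 : γ < 1) (x : S) (b : ℕ → A) :
    Summable (fun t => γ ^ t * r (traj T x b t, b t)) := by
  have hg : Summable (fun t : ℕ => C * γ ^ t) :=
    (summable_geometric_of_lt_one hγ0.le hγ1).mul_left C
  refine Summable.of_norm_bounded hg (fun t => ?_)
  rw [norm_mul, norm_pow, Real.norm_eq_abs, Real.norm_eq_abs, abs_of_pos hγ0, mul_comm]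
  exact mul_le_mul_of_nonneg_right (hr _) (pow_nonneg hγ0.le t)

lemma tele (hΦ : ∀ x, |Φ x| ≤ B) (hγ0 : 0 < γ) (hγ1 : γ < 1) (x : S) (b : ℕ → A) :
    HasSum (fun t => γ ^ (t+1) * Φ (traj T x b (t + 1)) - γ ^ t * Φ (traj T x b t))
      (-Φ x) := by
  set g : ℕ → ℝ := fun t => γ ^ t * Φ (traj T x b t) with hg
  have hnorm : Summable (fun t => ‖g (t+1) - g t‖) := by
    have hgsum : Summable (fun t : ℕ => (B * γ + B) * γ ^ t) :=
      (summable_geometric_of_lt_one hγ0.le hγ1).mul_left _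
    refine Summable.of_nonneg_of_le (fun t => norm_nonneg _) (fun t => ?_) hgsum
    have h1 : ‖g (t+1)‖ ≤ B * γ * γ ^ t := by
      simp only [hg, norm_mul, norm_pow, Real.norm_eq_abs, abs_of_pos hγ0, pow_succ]
      calc γ ^ t * γ * |Φ (traj T x b (t+1))| ≤ γ ^ t * γ * B :=
            mul_le_mul_of_nonneg_left (hΦ _) (by positivity)
        _ = B * γ * γ ^ t := by ring
    have h2 : ‖g t‖ ≤ B * γ ^ t := by
      simp only [hg, norm_mul, norm_pow, Real.norm_eq_abs, abs_of_pos hγ0]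
      calc γ ^ t * |Φ (traj T x b t)| ≤ γ ^ t * B :=
            mul_le_mul_of_nonneg_left (hΦ _) (by positivity)
        _ = B * γ ^ t := by ring
    calc ‖g (t+1) - g t‖ ≤ ‖g (t+1)‖ + ‖g t‖ := norm_sub_le _ _
      _ ≤ B * γ * γ ^ t + B * γ ^ t := add_le_add h1 h2
      _ = (B * γ + B) * γ ^ t := by ring
  rw [hasSum_iff_tendsto_nat_of_summable_norm hnorm]
  have hps : ∀ n, ∑ i ∈ Finset.range n, (g (i+1) - g i) = g n - g 0 :=
    fun n => Finset.sum_range_sub g n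
  simp only [hps]
  have hg0 : g 0 = Φ x := by simp [hg, traj]
  have hlim : Filter.Tendsto g Filter.atTop (nhds 0) := by
    refine squeeze_zero_norm (a := fun n => B * γ ^ n) (fun n => ?_) ?_
    · 
      simp only [hg, norm_mul, norm_pow, Real.norm_eq_abs, abs_of_pos hγ0]
      calc γ ^ n * |Φ (traj T x b n)| ≤ γ ^ n * B :=
            mul_le_mul_of_nonneg_left (hΦ _) (by positivity)
        _ = B * γ ^ n := by ring
    · have h5 := tendsto_pow_atTop_nhds_zero_of_lt_one hγ0.le hγ1
      simpa using h5.const_mul B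
  have := hlim.sub_const (g 0)
  simpa [hg0] using this

lemma shaped_eq (hr : ∀ p, |r p| ≤ C) (hΦ : ∀ x, |Φ x| ≤ B)
    (hγ0 : 0 < γ) (hγ1 : γ < 1) (x : S) (b : ℕ → A) :
    (∑' t, γ ^ t *
        (r (traj T x b t, b t) + γ * Φ (traj T x b (t + 1)) - Φ (traj T x b t)))
      = (∑' t, γ ^ t * r (traj T x b t, b t)) - Φ x := by
  have hsr := sum_r T r C γ hr hγ0 hγ1 x b
  have ht := tele T γ Φ B hΦ hγ0 hγ1 x b
  have heq : ∀ t, γ ^ t *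
      (r (traj T x b t, b t) + γ * Φ (traj T x b (t + 1)) - Φ (traj T x b t))
    = γ ^ t * r (traj T x b t, b t)
      + (γ ^ (t+1) * Φ (traj T x b (t + 1)) - γ ^ t * Φ (traj T x b t)) := by
    intro t; ring
  have h2 := (hsr.hasSum.add ht).tsum_eq
  rw [tsum_congr heq, h2, ← sub_eq_add_neg]

end aux

/-- Optimal-policy invariance of potential-based shaping for a deterministic
system: an action sequence attains the supremum of the shaped return iff it
attains the supremum of the original return. -/
theorem stmt7 {S A : Type*} [Nonempty A] (T : S × A → S)
    (r : S × A → ℝ) (C : ℝ) (hr : ∀ p, |r p| ≤ C)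
    (γ : ℝ) (hγ0 : 0 < γ) (hγ1 : γ < 1)
    (Φ : S → ℝ) (B : ℝ) (hΦ : ∀ x, |Φ x| ≤ B) (x : S) (a : ℕ → A) :
    ((∑' t, γ ^ t *
        (r (traj T x a t, a t) + γ * Φ (traj T x a (t + 1)) - Φ (traj T x a t)))
      = ⨆ b : ℕ → A, ∑' t, γ ^ t *
          (r (traj T x b t, b t) + γ * Φ (traj T x b (t + 1)) - Φ (traj T x b t)))
      ↔
    ((∑' t, γ ^ t * r (traj T x a t, a t))
      = ⨆ b : ℕ → A, ∑' t, γ ^ t * r (traj T x b t, b t)) := by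
  have hsh := shaped_eq T r C γ Φ B hr hΦ hγ0 hγ1 x
  have hbdd : BddAbove (Set.range (fun b : ℕ → A => ∑' t, γ ^ t * r (traj T x b t, b t))) := by
    refine ⟨C / (1 - γ), ?_⟩
    rintro y ⟨b, rfl⟩
    have hsr := sum_r T r C γ hr hγ0 hγ1 x b
    calc (∑' t, γ ^ t * r (traj T x b t, b t))
        ≤ ∑' t : ℕ, C * γ ^ t := by
          refine Summable.tsum_le_tsum (fun t => ?_) hsr
            ((summable_geometric_of_lt_one hγ0.le hγ1).mul_left C)
          have := (abs_le.mp (hr (traj T x b t, b t))).2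
          calc γ ^ t * r (traj T x b t, b t) ≤ γ ^ t * C :=
                mul_le_mul_of_nonneg_left this (by positivity)
            _ = C * γ ^ t := by ring
      _ = C / (1 - γ) := by
          rw [tsum_mul_left, tsum_geometric_of_lt_one hγ0.le hγ1]
          rw [div_eq_mul_inv]
  have hsup : (⨆ b : ℕ → A, ∑' t, γ ^ t *
          (r (traj T x b t, b t) + γ * Φ (traj T x b (t + 1)) - Φ (traj T x b t)))
      = (⨆ b : ℕ → A, ∑' t, γ ^ t * r (traj T x b t, b t)) - Φ x := by
    simp only [hsh]
    have hmono : Monotone (fun y : ℝ => y - Φ x) := fun y z h => sub_le_sub_right h _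
    exact (hmono.map_ciSup_of_continuousAt (continuousAt_id.sub continuousAt_const) hbdd).symm
  rw [hsh a, hsup, sub_left_inj]
end
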